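/- (Centered partial-sum bound, display (D.3).) Let ε_1, …, ε_n be real numbers satisfying the uniform interval bound with level ω > 0. Then for all integers 0 ≤ c_- < k < c_+ ≤ n, | ∑_{t=c_-+1}^{k} ε_t − ((k−c_-)/(c_+−c_-)) ∑_{t=c_-+1}^{c_+} ε_t | ≤ 2 ω √( min(k−c_-, c_+−k) ). -/

import Mathlib

open Finset

/-- Mean of `x` over the interval `(s, e]`. -/
noncomputable def segMean (x : ℕ → ℝ) (s e : ℕ) : ℝ :=
  (∑ t ∈ Finset.Ioc s e, x t) / ((e : ℝ) - (s : ℝ))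

/-- CUSUM statistic of `x` at split point `b` on the interval `(s, e]`. -/
noncomputable def cusum (x : ℕ → ℝ) (s b e : ℕ) : ℝ :=
  Real.sqrt (((b : ℝ) - s) * ((e : ℝ) - b) / ((e : ℝ) - s)) *
    (segMean x s b - segMean x b e)

/-- Largest element of `A ∪ {0}` that is `< t`. -/
def lbd (A : Finset ℕ) (t : ℕ) : ℕ :=
  ((insert 0 A).filter (fun a => a < t)).max.unbotD 0

/-- Smallest element of `A ∪ {n}` that is `≥ t`. -/
def ubd (A : Finset ℕ) (n t : ℕ) : ℕ :=
  (((insert n A).filter (fun a => t ≤ a)).min).untopD n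

/-- Residual sum of squares of `x_1, …, x_n` with respect to the segmentation
of `{1, …, n}` induced by the set of change point candidates `A`:
each `t` lies in the segment `(lbd A t, ubd A n t]`. -/
noncomputable def RSS (x : ℕ → ℝ) (n : ℕ) (A : Finset ℕ) : ℝ :=
  ∑ t ∈ Finset.Icc 1 n, (x t - segMean x (lbd A t) (ubd A n t)) ^ 2

/-- Schwarz criterion with penalty `ξ`. -/
noncomputable def SC (x : ℕ → ℝ) (n : ℕ) (ξ : ℝ) (A : Finset ℕ) : ℝ :=
  ((n : ℝ) / 2) * Real.log (RSS x n A / n) + (A.card : ℝ) * ξ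

/-- `ε_1, …, ε_n` satisfies the uniform interval bound with level `ω`:
`|∑_{t=s+1}^e ε_t| ≤ ω √(e − s)` for all `0 ≤ s < e ≤ n`. -/
def UIB (ε : ℕ → ℝ) (n : ℕ) (ω : ℝ) : Prop :=
  ∀ s e : ℕ, s < e → e ≤ n →
    |∑ t ∈ Finset.Ioc s e, ε t| ≤ ω * Real.sqrt ((e : ℝ) - s)

/-- Centered partial-sum bound, display (D.3): if `ε` satisfies the uniform
interval bound with level `ω`, then for all `0 ≤ c_- < k < c_+ ≤ n`,
`|∑_{t=c_-+1}^k ε_t − ((k−c_-)/(c_+−c_-)) ∑_{t=c_-+1}^{c_+} ε_t|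
  ≤ 2ω √(min(k−c_-, c_+−k))`. -/

lemma key_sqrt_ineq (A B : ℝ) (hA : 0 < A) (hB : 0 < B) :
    B * Real.sqrt A ≤ (A + B) * Real.sqrt (min A B) := by
  rcases le_total A B with h | h
  · rw [min_eq_left h]
    have := Real.sqrt_nonneg A
    nlinarith
  · rw [min_eq_right h]
    have h1 : Real.sqrt A * Real.sqrt B ≤ A + B := by
      rw [← Real.sqrt_mul hA.le]
      calc Real.sqrt (A * B) ≤ Real.sqrt ((A + B) ^ 2) :=
            Real.sqrt_le_sqrt (by nlinarith)
        _ = A + B := Real.sqrt_sq (by positivity)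
    have hb : Real.sqrt B ^ 2 = B := Real.sq_sqrt hB.le
    have hnb := Real.sqrt_nonneg B
    have hna := Real.sqrt_nonneg A
    nlinarith [mul_nonneg hnb (sub_nonneg.mpr h1)]

theorem centered_partial_sum_bound
    (n : ℕ) (ε : ℕ → ℝ) (ω : ℝ) (hω : 0 < ω) (hε : UIB ε n ω)
    (cm k cp : ℕ) (h1 : cm < k) (h2 : k < cp) (h3 : cp ≤ n) :
    |(∑ t ∈ Finset.Ioc cm k, ε t)
        - (((k : ℝ) - cm) / ((cp : ℝ) - cm)) * (∑ t ∈ Finset.Ioc cm cp, ε t)|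
      ≤ 2 * ω * Real.sqrt (min ((k : ℝ) - cm) ((cp : ℝ) - k)) := by
  set S1 := ∑ t ∈ Finset.Ioc cm k, ε t with hS1
  set S2 := ∑ t ∈ Finset.Ioc k cp, ε t with hS2
  set A := (k : ℝ) - cm with hA
  set B := (cp : ℝ) - k with hB
  have hA0 : 0 < A := by
    simp only [hA, sub_pos]; exact_mod_cast h1
  have hB0 : 0 < B := by
    simp only [hB, sub_pos]; exact_mod_cast h2
  have hN : (cp : ℝ) - cm = A + B := by simp only [hA, hB]; ring
  have hsplit : (∑ t ∈ Finset.Ioc cm cp, ε t) = S1 + S2 := by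
    rw [hS1, hS2, Finset.sum_Ioc_consecutive _ (le_of_lt h1) (le_of_lt h2)]
  have hbound1 : |S1| ≤ ω * Real.sqrt A := hε cm k h1 (le_trans (le_of_lt h2) h3)
  have hbound2 : |S2| ≤ ω * Real.sqrt B := hε k cp h2 h3
  have hNpos : (0:ℝ) < A + B := by linarith
  have hexpr : S1 - (A / ((cp:ℝ) - cm)) * (S1 + S2) = (B * S1 - A * S2) / (A + B) := by
    rw [hN]; field_simp; ring
  rw [hsplit, hexpr]
  have hk1 : B * Real.sqrt A ≤ (A + B) * Real.sqrt (min A B) := key_sqrt_ineq A B hA0 hB0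
  have hk2 : A * Real.sqrt B ≤ (A + B) * Real.sqrt (min A B) := by
    have := key_sqrt_ineq B A hB0 hA0
    rw [min_comm] at this; linarith
  rw [abs_div, abs_of_pos hNpos, div_le_iff₀ hNpos]
  have habs : |B * S1 - A * S2| ≤ B * |S1| + A * |S2| := by
    calc |B * S1 - A * S2| ≤ |B * S1| + |A * S2| := abs_sub _ _
      _ = B * |S1| + A * |S2| := by rw [abs_mul, abs_mul, abs_of_pos hB0, abs_of_pos hA0]
  have hsq : 0 ≤ Real.sqrt (min A B) := Real.sqrt_nonneg _
  calc |B * S1 - A * S2| ≤ B * |S1| + A * |S2| := habs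
    _ ≤ B * (ω * Real.sqrt A) + A * (ω * Real.sqrt B) := by
        gcongr
    _ = ω * (B * Real.sqrt A) + ω * (A * Real.sqrt B) := by ring
    _ ≤ ω * ((A+B) * Real.sqrt (min A B)) + ω * ((A+B) * Real.sqrt (min A B)) := by
        gcongr
    _ = 2 * ω * Real.sqrt (min A B) * (A + B) := by ring
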